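/- Let I be a proper homogeneous ideal of S = ℂ[x_0, ..., x_n] containing a complete intersection ideal I_CI = (f_0, ..., f_n), and suppose both S/I and S/I_CI are artinian Gorenstein with the same socle degree. Then I = I_CI. -/

import Mathlib

open MvPolynomial

noncomputable def hilb (n : ℕ) (I : Ideal (MvPolynomial (Fin (n + 1)) ℂ)) (k : ℕ) : ℕ :=
  Module.finrank ℂ (Submodule.map (Ideal.Quotient.mkₐ ℂ I).toLinearMap
    (homogeneousSubmodule (Fin (n + 1)) ℂ k))

/-- `S/I` is a (graded) artinian Gorenstein ring with socle degree `N`: the quotient is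
artinian, its socle is the degree-`N` graded piece, and that piece is 1-dimensional. -/
noncomputable def IsArtinianGorensteinOfSocleDegree (n : ℕ)
    (I : Ideal (MvPolynomial (Fin (n + 1)) ℂ)) (N : ℕ) : Prop :=
  IsArtinianRing (MvPolynomial (Fin (n + 1)) ℂ ⧸ I) ∧
  (Submodule.colon (⊥ : Ideal (MvPolynomial (Fin (n + 1)) ℂ ⧸ I))
      (Ideal.span (Set.range fun i => Ideal.Quotient.mk I (X i)))).restrictScalars ℂ =
    Submodule.map (Ideal.Quotient.mkₐ ℂ I).toLinearMap
      (homogeneousSubmodule (Fin (n + 1)) ℂ N) ∧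
  hilb n I N = 1

attribute [local instance] MvPolynomial.gradedAlgebra

lemma aux_homComponent_mem_span {n : ℕ} {f : Fin (n + 1) → MvPolynomial (Fin (n + 1)) ℂ}
    {d : Fin (n + 1) → ℕ} (hf : ∀ i, (f i).IsHomogeneous (d i))
    {g : MvPolynomial (Fin (n + 1)) ℂ} (hg : g ∈ Ideal.span (Set.range f)) (k : ℕ) :
    homogeneousComponent k g ∈ Ideal.span (Set.range f) := by
  have hspan : (Ideal.span (Set.range f)).IsHomogeneous
      (homogeneousSubmodule (Fin (n + 1)) ℂ) := by
    apply Ideal.homogeneous_span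
    rintro x ⟨i, rfl⟩
    exact ⟨d i, (mem_homogeneousSubmodule _ _).2 (hf i)⟩
  have h := hspan k hg
  rwa [show ((DirectSum.decompose (homogeneousSubmodule (Fin (n + 1)) ℂ) g k :
      MvPolynomial (Fin (n + 1)) ℂ) = homogeneousComponent k g) from
    MvPolynomial.decomposition.decompose'_apply g k] at h

lemma aux_degree_add {m : ℕ} (a b : Fin (m + 1) →₀ ℕ) :
    Finsupp.degree (a + b) = Finsupp.degree a + Finsupp.degree b := by
  simp [Finsupp.degree_eq_weight_one, map_add]

lemma aux_exists_pow_mem {n : ℕ} {ICI : Ideal (MvPolynomial (Fin (n + 1)) ℂ)}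
    (hart : IsArtinianRing (MvPolynomial (Fin (n + 1)) ℂ ⧸ ICI))
    (hhomCI : ∀ g ∈ ICI, ∀ k : ℕ, homogeneousComponent k g ∈ ICI) (i : Fin (n + 1)) :
    ∃ k : ℕ, (X i : MvPolynomial (Fin (n + 1)) ℂ) ^ k ∈ ICI := by
  classical
  haveI := hart
  set Q := MvPolynomial (Fin (n + 1)) ℂ ⧸ ICI
  set x : Q := Ideal.Quotient.mk ICI (X i) with hx
  obtain ⟨k, hk⟩ := IsArtinian.monotone_stabilizes (R := Q) (M := Q)
    ⟨fun k => OrderDual.toDual (Ideal.span {x ^ k}), by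
      intro a b hab
      refine Ideal.span_le.2 ?_
      simp only [Set.singleton_subset_iff, SetLike.mem_coe]
      exact Ideal.mem_span_singleton.2 (pow_dvd_pow x hab)⟩
  have hmem : x ^ k ∈ Ideal.span {x ^ (k + 1)} := by
    have h := hk (k + 1) (Nat.le_succ k)
    change Ideal.span {x ^ k} = Ideal.span {x ^ (k + 1)} at h
    rw [← h]
    exact Ideal.mem_span_singleton_self _
  obtain ⟨q, hq⟩ := Ideal.mem_span_singleton'.1 hmem
  obtain ⟨p, rfl⟩ := Ideal.Quotient.mk_surjective q
  have hsub : p * X i ^ (k + 1) - X i ^ k ∈ ICI := by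
    rw [← Ideal.Quotient.eq_zero_iff_mem, map_sub, map_mul, map_pow, map_pow, ← hx, hq, sub_self]
  have hcomp := hhomCI _ hsub k
  have h1 : homogeneousComponent k ((X i : MvPolynomial (Fin (n + 1)) ℂ) ^ k) = X i ^ k := by
    rw [homogeneousComponent_of_mem ((mem_homogeneousSubmodule _ _).2 (isHomogeneous_X_pow i k))]
    simp
  have h2 : homogeneousComponent k (p * (X i : MvPolynomial (Fin (n + 1)) ℂ) ^ (k + 1)) = 0 := by
    apply homogeneousComponent_eq_zero'
    intro dd hdd
    have := MvPolynomial.support_mul _ _ hdd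
    rw [Finset.mem_add] at this
    obtain ⟨a, ha, b, hb, rfl⟩ := this
    rw [support_X_pow] at hb
    simp only [Finset.mem_singleton] at hb
    subst hb
    rw [aux_degree_add]
    have : Finsupp.degree (Finsupp.single i (k + 1)) = k + 1 := by
      rw [Finsupp.degree_apply, Finsupp.support_single_ne_zero i (Nat.succ_ne_zero k),
        Finset.sum_singleton, Finsupp.single_eq_same]
    omega
  rw [map_sub, h2, h1, zero_sub] at hcomp
  exact ⟨k, by simpa using ICI.neg_mem hcomp⟩

lemma aux_high_degree_mem {n : ℕ} {ICI : Ideal (MvPolynomial (Fin (n + 1)) ℂ)}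
    {kk : Fin (n + 1) → ℕ} (hkk : ∀ i, (X i : MvPolynomial (Fin (n + 1)) ℂ) ^ kk i ∈ ICI)
    {m : ℕ} (hm : (∑ i, kk i) < m) {g : MvPolynomial (Fin (n + 1)) ℂ}
    (hg : g.IsHomogeneous m) : g ∈ ICI := by
  classical
  rw [← g.support_sum_monomial_coeff]
  refine Ideal.sum_mem _ fun dd hdd => ?_
  have hdeg : Finsupp.degree dd = m := by
    have := hg (MvPolynomial.mem_support_iff.1 hdd)
    rw [Finsupp.degree_eq_weight_one]; exact this
  have hdeg' : (∑ i, dd i) = m := by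
    rw [← hdeg, Finsupp.degree_apply]
    exact (Finset.sum_subset (Finset.subset_univ _)
      (fun i _ hi => Finsupp.notMem_support_iff.1 hi)).symm
  have hex : ∃ i, kk i ≤ dd i := by
    by_contra hcon
    push_neg at hcon
    have : (∑ i, dd i) < ∑ i, kk i :=
      Finset.sum_lt_sum_of_nonempty Finset.univ_nonempty fun i _ => hcon i
    omega
  obtain ⟨i, hi⟩ := hex
  have hsplit : (monomial dd) (coeff dd g) =
      (X i : MvPolynomial (Fin (n + 1)) ℂ) ^ kk i *
        (monomial (dd - Finsupp.single i (kk i))) (coeff dd g) := by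
    rw [X_pow_eq_monomial, monomial_mul, one_mul, add_tsub_cancel_of_le]
    exact (Finsupp.single_le_iff).2 hi
  rw [hsplit]
  exact Ideal.mul_mem_right _ _ (hkk i)

set_option maxHeartbeats 1000000 in
/-- If a proper homogeneous ideal `I` contains a complete intersection ideal
`I_CI = (f_0, ..., f_n)` and both `S/I` and `S/I_CI` are artinian Gorenstein of the same
socle degree, then `I = I_CI`. -/
theorem eq_of_contains_complete_intersection_same_socle_degree (n N : ℕ)
    (f : Fin (n + 1) → MvPolynomial (Fin (n + 1)) ℂ) (d : Fin (n + 1) → ℕ)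
    (hf : ∀ i, (f i).IsHomogeneous (d i))
    (hreg : RingTheory.Sequence.IsRegular (MvPolynomial (Fin (n + 1)) ℂ) (List.ofFn f))
    (I : Ideal (MvPolynomial (Fin (n + 1)) ℂ))
    (hhom : ∀ g ∈ I, ∀ k : ℕ, homogeneousComponent k g ∈ I)
    (hproper : I ≠ ⊤)
    (hsub : Ideal.span (Set.range f) ≤ I)
    (hI : IsArtinianGorensteinOfSocleDegree n I N)
    (hCI : IsArtinianGorensteinOfSocleDegree n (Ideal.span (Set.range f)) N) :
    I = Ideal.span (Set.range f) := by
  classical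
  obtain ⟨hart, hsoc, hone⟩ := hCI
  obtain ⟨-, -, hIone⟩ := hI
  set ICI := Ideal.span (Set.range f) with hICIdef
  have hhomCI : ∀ g ∈ ICI, ∀ k : ℕ, homogeneousComponent k g ∈ ICI :=
    fun g hg k => aux_homComponent_mem_span hf hg k
  choose kk hkk using fun i => aux_exists_pow_mem hart hhomCI i
  set K := (∑ i, kk i) + 1 with hK
  -- there is a homogeneous form of degree N not in I
  have hexh : ∃ h : MvPolynomial (Fin (n + 1)) ℂ, h.IsHomogeneous N ∧ h ∉ I := by
    by_contra hcon
    push_neg at hcon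
    have hbot : Submodule.map (Ideal.Quotient.mkₐ ℂ I).toLinearMap
        (homogeneousSubmodule (Fin (n + 1)) ℂ N) = ⊥ := by
      rw [Submodule.eq_bot_iff]
      rintro z ⟨y, hy, rfl⟩
      have hyI : y ∈ I := hcon y ((mem_homogeneousSubmodule _ _).1 hy)
      show Ideal.Quotient.mk I y = 0
      exact Ideal.Quotient.eq_zero_iff_mem.2 hyI
    rw [hilb, hbot] at hIone
    simp at hIone
  obtain ⟨h, hhN, hhI⟩ := hexh
  have hhICI : h ∉ ICI := fun hc => hhI (hsub hc)
  have hhmem : Ideal.Quotient.mk ICI h ∈ Submodule.map (Ideal.Quotient.mkₐ ℂ ICI).toLinearMap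
      (homogeneousSubmodule (Fin (n + 1)) ℂ N) :=
    ⟨h, (mem_homogeneousSubmodule _ _).2 hhN, rfl⟩
  have hhne : Ideal.Quotient.mk ICI h ≠ 0 :=
    fun h0 => hhICI (Ideal.Quotient.eq_zero_iff_mem.1 h0)
  have honedim : ∀ z ∈ Submodule.map (Ideal.Quotient.mkₐ ℂ ICI).toLinearMap
      (homogeneousSubmodule (Fin (n + 1)) ℂ N), ∃ c : ℂ, z = c • Ideal.Quotient.mk ICI h := by
    intro z hz
    have h1 : Module.finrank ℂ (Submodule.map (Ideal.Quotient.mkₐ ℂ ICI).toLinearMap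
        (homogeneousSubmodule (Fin (n + 1)) ℂ N)) = 1 := hone
    obtain ⟨c, hc⟩ := exists_smul_eq_of_finrank_eq_one h1
      (x := (⟨Ideal.Quotient.mk ICI h, hhmem⟩ : Submodule.map
        (Ideal.Quotient.mkₐ ℂ ICI).toLinearMap (homogeneousSubmodule (Fin (n + 1)) ℂ N)))
      (fun h0 => hhne (congrArg Subtype.val h0)) ⟨z, hz⟩
    exact ⟨c, (congrArg Subtype.val hc).symm⟩
  -- the main downward induction
  have main : ∀ j k : ℕ, K ≤ k + j → ∀ g : MvPolynomial (Fin (n + 1)) ℂ,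
      g.IsHomogeneous k → g ∈ I → g ∈ ICI := by
    intro j
    induction j with
    | zero =>
      intro k hkK g hg _
      exact aux_high_degree_mem hkk (by omega) hg
    | succ j ih =>
      intro k hkK g hg hgI
      by_cases hbig : K ≤ k
      · exact aux_high_degree_mem hkk (by omega) hg
      · have hX : ∀ i, (X i) * g ∈ ICI := fun i =>
          ih (k + 1) (by omega) _ (by simpa [add_comm] using (isHomogeneous_X ℂ i).mul hg)
            (I.mul_mem_left _ hgI)
        have hcol : Ideal.Quotient.mk ICI g ∈
            (Submodule.colon (⊥ : Ideal (MvPolynomial (Fin (n + 1)) ℂ ⧸ ICI))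
              (Ideal.span (Set.range fun i => Ideal.Quotient.mk ICI (X i)))) := by
          rw [Submodule.mem_colon]
          intro p hp
          have hle : Ideal.span (Set.range fun i => Ideal.Quotient.mk ICI (X i)) ≤
              LinearMap.ker (LinearMap.mulLeft (MvPolynomial (Fin (n + 1)) ℂ ⧸ ICI)
                (Ideal.Quotient.mk ICI g)) := by
            rw [Ideal.span_le]
            rintro w ⟨i, rfl⟩
            simp only [SetLike.mem_coe, LinearMap.mem_ker, LinearMap.mulLeft_apply]
            rw [← map_mul]
            exact Ideal.Quotient.eq_zero_iff_mem.2 (by rw [mul_comm]; exact hX i)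
          have hker := hle hp
          simp only [LinearMap.mem_ker, LinearMap.mulLeft_apply] at hker
          simpa [Submodule.mem_bot, smul_eq_mul] using hker
        have hmem2 : Ideal.Quotient.mk ICI g ∈
            Submodule.map (Ideal.Quotient.mkₐ ℂ ICI).toLinearMap
              (homogeneousSubmodule (Fin (n + 1)) ℂ N) := by
          rw [← hsoc]
          exact (Submodule.restrictScalars_mem ℂ _ _).2 hcol
        obtain ⟨c, hc⟩ := honedim _ hmem2
        have hsm : Ideal.Quotient.mk ICI (c • h) = c • Ideal.Quotient.mk ICI h :=
          (Ideal.Quotient.mkₐ ℂ ICI).toLinearMap.map_smul c h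
        have hdiff : g - c • h ∈ ICI := by
          rw [← Ideal.Quotient.eq_zero_iff_mem, map_sub, hsm, ← hc, sub_self]
        by_cases hc0 : c = 0
        · simpa [hc0] using hdiff
        · exfalso
          apply hhI
          have h1 : g - c • h ∈ I := hsub hdiff
          have h2 : c • h ∈ I := by
            have := I.sub_mem hgI h1
            simpa using this
          have h3 : MvPolynomial.C c⁻¹ * (c • h) ∈ I := I.mul_mem_left _ h2
          rwa [smul_eq_C_mul, ← mul_assoc, ← C_mul, inv_mul_cancel₀ hc0, C_1, one_mul] at h3
  refine le_antisymm ?_ hsub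
  intro g hg
  rw [← g.sum_homogeneousComponent]
  exact Ideal.sum_mem _ fun k _ =>
    main K k (by omega) _ (homogeneousComponent_isHomogeneous k g) (hhom g hg k)
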